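/- For positive integers n and m, the multiplicity of the polynomial 1+q^m in (q;q)_n := Π_{i=1}^n (1-q^i) equals ⌊n/(2m)⌋; that is, (1+q^m)^{⌊n/(2m)⌋} divides (q;q)_n in ℤ[q], but (1+q^m)^{⌊n/(2m)⌋+1} does not. -/

import Mathlib

open Polynomial

private lemma aux_dvd_factor (m i : ℕ) (hi : 2 * m ∣ i) :
    (1 + (Polynomial.X : Polynomial ℤ) ^ m) ∣ (1 - Polynomial.X ^ i) := by
  obtain ⟨k, rfl⟩ := hi
  have h1 : (1 + (Polynomial.X : Polynomial ℤ) ^ m) ∣ (X : Polynomial ℤ) ^ (2 * m) - 1 := by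
    refine ⟨X ^ m - 1, by ring⟩
  have h2 : ((X : Polynomial ℤ) ^ (2 * m) - 1) ∣ (X : Polynomial ℤ) ^ (2 * m * k) - 1 := by
    have := sub_dvd_pow_sub_pow ((X : Polynomial ℤ) ^ (2 * m)) 1 k
    simpa [← pow_mul] using this
  have := h1.trans h2
  simpa [dvd_neg] using this.neg_right

/-- the multiplicity of `1+q^m` in `(q;q)_n = Π_{i=1}^n (1-q^i)` is `⌊n/(2m)⌋`. -/
theorem stmt9 (n m : ℕ) (hn : 1 ≤ n) (hm : 1 ≤ m) :
    ((1 + (Polynomial.X : Polynomial ℤ) ^ m) ^ (n / (2 * m)) ∣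
      ∏ i ∈ Finset.Icc 1 n, (1 - Polynomial.X ^ i)) ∧
    ¬ ((1 + (Polynomial.X : Polynomial ℤ) ^ m) ^ (n / (2 * m) + 1) ∣
      ∏ i ∈ Finset.Icc 1 n, (1 - Polynomial.X ^ i)) := by
  classical
  have hIcc : Finset.Icc 1 n = Finset.Ioc 0 n := rfl
  set S : Finset ℕ := (Finset.Icc 1 n).filter (fun i => 2 * m ∣ i) with hS
  have hcard : S.card = n / (2 * m) := by
    rw [hS, hIcc]
    exact Nat.Ioc_filter_dvd_card_eq_div n (2 * m)
  constructor
  · -- divisibility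
    have h1 : (1 + (Polynomial.X : Polynomial ℤ) ^ m) ^ (n / (2 * m)) ∣
        ∏ i ∈ S, (1 - Polynomial.X ^ i) := by
      rw [← hcard, ← Finset.prod_const]
      exact Finset.prod_dvd_prod_of_dvd _ _ (fun i hi =>
        aux_dvd_factor m i (Finset.mem_filter.mp hi).2)
    exact h1.trans (Finset.prod_dvd_prod_of_subset S (Finset.Icc 1 n) _ (Finset.filter_subset _ _))
  · -- non-divisibility
    intro hdvd
    set N := n / (2 * m)
    -- move to ℂ
    have hdvdC : (1 + (Polynomial.X : Polynomial ℂ) ^ m) ^ (N + 1) ∣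
        ∏ i ∈ Finset.Icc 1 n, (1 - Polynomial.X ^ i) := by
      have := Polynomial.map_dvd (Int.castRingHom ℂ) hdvd
      simpa [Polynomial.map_pow, Polynomial.map_prod] using this
    -- primitive root
    have h2m : (2 * m : ℕ) ≠ 0 := by positivity
    obtain ⟨ζ, hprim⟩ : ∃ ζ : ℂ, IsPrimitiveRoot ζ (2 * m) :=
      ⟨_, Complex.isPrimitiveRoot_exp (2 * m) h2m⟩
    have hζ2m : ζ ^ (2 * m) = 1 := hprim.pow_eq_one
    have hζmne : ζ ^ m ≠ 1 := hprim.pow_ne_one_of_pos_of_lt (by omega) (by omega)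
    have hζm : ζ ^ m = -1 := by
      have hsq : (ζ ^ m) ^ 2 = 1 := by rw [← pow_mul, mul_comm m 2]; exact hζ2m
      have : (ζ ^ m - 1) * (ζ ^ m + 1) = 0 := by ring_nf; linear_combination hsq
      rcases mul_eq_zero.mp this with h | h
      · exact absurd (by linear_combination h) hζmne
      · linear_combination h
    -- each factor is nonzero
    have hfac : ∀ i ∈ Finset.Icc 1 n, (1 - (Polynomial.X : Polynomial ℂ) ^ i) ≠ 0 := by
      intro i hi h
      rw [Finset.mem_Icc] at hi
      have := congrArg (Polynomial.eval 0) h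
      rw [Polynomial.eval_sub, Polynomial.eval_one, Polynomial.eval_pow, Polynomial.eval_X,
        zero_pow (by omega : i ≠ 0), Polynomial.eval_zero, sub_zero] at this
      exact one_ne_zero this
    have hP0 : (∏ i ∈ Finset.Icc 1 n, (1 - (Polynomial.X : Polynomial ℂ) ^ i)) ≠ 0 :=
      Finset.prod_ne_zero_iff.mpr hfac
    -- (X - C ζ) divides 1 + X^m
    have hXζ : ((Polynomial.X : Polynomial ℂ) - Polynomial.C ζ) ∣ (1 + X ^ m) :=
      Polynomial.dvd_iff_isRoot.mpr (by simp [Polynomial.IsRoot, hζm])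
    have hdvd2 : ((Polynomial.X : Polynomial ℂ) - Polynomial.C ζ) ^ (N + 1) ∣
        ∏ i ∈ Finset.Icc 1 n, (1 - Polynomial.X ^ i) :=
      (pow_dvd_pow_of_dvd hXζ _).trans hdvdC
    have hge : N + 1 ≤ Polynomial.rootMultiplicity ζ
        (∏ i ∈ Finset.Icc 1 n, (1 - (Polynomial.X : Polynomial ℂ) ^ i)) :=
      (Polynomial.le_rootMultiplicity_iff hP0).mpr hdvd2
    -- compute root multiplicity of the product
    have hroots := Polynomial.roots_prod (fun i => (1 - (Polynomial.X : Polynomial ℂ) ^ i))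
      (Finset.Icc 1 n) hP0
    have hcount : Polynomial.rootMultiplicity ζ
        (∏ i ∈ Finset.Icc 1 n, (1 - (Polynomial.X : Polynomial ℂ) ^ i))
        = ∑ i ∈ Finset.Icc 1 n,
            Polynomial.rootMultiplicity ζ (1 - (Polynomial.X : Polynomial ℂ) ^ i) := by
      rw [← Polynomial.count_roots, hroots, Multiset.count_bind]
      rw [Finset.sum]
      congr 1
      refine Multiset.map_congr rfl fun i _ => ?_
      show Multiset.count ζ ((1 - (Polynomial.X : Polynomial ℂ) ^ i).roots) = _
      rw [Polynomial.count_roots]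
    -- each root multiplicity is at most the indicator of 2m ∣ i
    have hbound : ∀ i ∈ Finset.Icc 1 n,
        Polynomial.rootMultiplicity ζ (1 - (Polynomial.X : Polynomial ℂ) ^ i)
          ≤ if 2 * m ∣ i then 1 else 0 := by
      intro i hi
      rw [Finset.mem_Icc] at hi
      by_cases hdvd : 2 * m ∣ i
      · rw [if_pos hdvd]
        have hsep : ((Polynomial.X : Polynomial ℂ) ^ i - Polynomial.C 1).Separable :=
          Polynomial.separable_X_pow_sub_C 1 (Nat.cast_ne_zero.mpr (by omega)) one_ne_zero
        have heq : (1 - (Polynomial.X : Polynomial ℂ) ^ i)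
            = -((Polynomial.X : Polynomial ℂ) ^ i - Polynomial.C 1) := by
          rw [map_one]; ring
        rw [← Polynomial.count_roots, heq, Polynomial.roots_neg, Polynomial.count_roots]
        exact Polynomial.rootMultiplicity_le_one_of_separable hsep ζ
      · rw [if_neg hdvd]
        refine le_of_eq (Polynomial.rootMultiplicity_eq_zero ?_)
        simp only [Polynomial.IsRoot, Polynomial.eval_sub, Polynomial.eval_one,
          Polynomial.eval_pow, Polynomial.eval_X]
        intro h
        have : ζ ^ i = 1 := by linear_combination -h
        exact hdvd ((hprim.pow_eq_one_iff_dvd i).mp this)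
    have hsum : (∑ i ∈ Finset.Icc 1 n,
        Polynomial.rootMultiplicity ζ (1 - (Polynomial.X : Polynomial ℂ) ^ i)) ≤ N := by
      calc _ ≤ ∑ i ∈ Finset.Icc 1 n, (if 2 * m ∣ i then 1 else 0) :=
            Finset.sum_le_sum hbound
        _ = S.card := by rw [hS, Finset.card_filter]
        _ = N := hcard
    omega
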